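/- arXiv:2103.13743 — 2 statements merged into one kernel-verified Lean document; each statement's English description precedes it below -/
import Mathlib

section
/- Converse direction for assumptions, under extendability: let C1 = (D1, Ω1), C2 = (D2, Ω2), C = (D, Ω) be linear contracts defined by the data (𝔄¹, 𝔄⁰, 𝔞⁰, 𝔊¹, 𝔊⁰, 𝔤⁰), (𝔅¹, 𝔅⁰, 𝔟⁰, ℌ¹, ℌ⁰, 𝔥⁰) and (ℭ¹, ℭ⁰, 𝔠⁰, 𝔍¹, 𝔍⁰, 𝔧⁰), and write 𝔊^i = [𝔊^i_d, 𝔊^i_z] for i = 0, 1. Assume that (ℭ¹, ℭ⁰, 𝔠⁰) is extendable and that the stacked triple ([[ℭ¹, 0], [𝔊¹_d, 𝔊¹_z]], [[ℭ⁰, 0], [𝔊⁰_d, 𝔊⁰_z]], [𝔠⁰; 𝔤⁰]) is extendable. If D ⊆ D⊗, where D⊗ is the assumption set of the cascaded composition C1 ⊗ C2, then for all vectors d0, d1 ∈ ℝ^{nd}, z0, z1 ∈ ℝ^{nz}: (i) ℭ¹d1 + ℭ⁰d0 ≤ 𝔠⁰ implies 𝔄¹d1 + 𝔄⁰d0 ≤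 𝔞⁰, and (ii) ℭ¹d1 + ℭ⁰d0 ≤ 𝔠⁰ together with 𝔊¹[d1; z1] + 𝔊⁰[d0; z0] ≤ 𝔤⁰ implies 𝔅¹z1 + 𝔅⁰z0 ≤ 𝔟⁰. -/
open Matrix

/-- A discrete-time signal with values in `ℝ^n`. -/
abbrev Sig (n : ℕ) := ℕ → (Fin n → ℝ)

/-- The assumption set of a linear contract:
`{d : V¹ d(k+1) + V⁰ d(k) ≤ v⁰ for all k}` (entry-wise inequality). -/
def LinAssump {s n : ℕ} (V1 V0 : Matrix (Fin s) (Fin n) ℝ) (v0 : Fin s → ℝ) :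
    Set (Sig n) :=
  {d | ∀ k : ℕ, V1 *ᵥ d (k + 1) + V0 *ᵥ d k ≤ v0}

/-- The guarantee set of a linear contract:
`{(d, y) : W¹ [d(k+1); y(k+1)] + W⁰ [d(k); y(k)] ≤ w⁰ for all k}`, where the stacked
vector `[d; y]` is encoded as `Sum.elim d y : Fin na ⊕ Fin nb → ℝ`. -/
def LinGuar {s na nb : ℕ} (W1 W0 : Matrix (Fin s) (Fin na ⊕ Fin nb) ℝ) (w0 : Fin s → ℝ) :
    Set (Sig na × Sig nb) :=
  {p | ∀ k : ℕ,
    W1 *ᵥ Sum.elim (p.1 (k + 1)) (p.2 (k + 1)) + W0 *ᵥ Sum.elim (p.1 k) (p.2 k) ≤ w0}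

/-- Assumption set `D⊗` of the cascaded composition of contracts. -/
def CompD {nd nz : ℕ} (D1 : Set (Sig nd)) (Ω1 : Set (Sig nd × Sig nz))
    (D2 : Set (Sig nz)) : Set (Sig nd) :=
  {d | d ∈ D1 ∧ ∀ z : Sig nz, (d, z) ∈ Ω1 → z ∈ D2}

/-- Guarantee set `Ω⊗` of the cascaded composition of contracts. -/
def CompΩ {nd nz ny : ℕ} (Ω1 : Set (Sig nd × Sig nz)) (Ω2 : Set (Sig nz × Sig ny)) :
    Set (Sig nd × Sig ny) :=
  {p | ∃ z : Sig nz, (p.1, z) ∈ Ω1 ∧ (z, p.2) ∈ Ω2}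

/-- A triple `(V¹, V⁰, v⁰)` is extendable if any one-step-feasible pair `(u0, u1)` can be
continued one more step. -/
def Extendable {m n : Type*} [Fintype n] (V1 V0 : Matrix m n ℝ) (v0 : m → ℝ) : Prop :=
  ∀ u0 u1 : n → ℝ, V1 *ᵥ u1 + V0 *ᵥ u0 ≤ v0 → ∃ u2 : n → ℝ, V1 *ᵥ u2 + V0 *ᵥ u1 ≤ v0

/-- The stacked matrix `[[ℭ, 0], [𝔊_d, 𝔊_z]]`, where the block decomposition
`𝔊 = [𝔊_d, 𝔊_z]` corresponds to the `Sum`-indexed columns of `G`. -/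
def Stack2 {sC sG nd nz : ℕ} (C : Matrix (Fin sC) (Fin nd) ℝ)
    (G : Matrix (Fin sG) (Fin nd ⊕ Fin nz) ℝ) :
    Matrix (Fin sC ⊕ Fin sG) (Fin nd ⊕ Fin nz) ℝ :=
  Matrix.of (Sum.elim (fun i => Sum.elim (C i) (fun _ => 0)) (fun i => G i))

/-- The stacked matrix `[[ℭ, 0, 0], [𝔊_d, 𝔊_z, 0], [0, ℌ_z, ℌ_y]]`, where
`𝔊 = [𝔊_d, 𝔊_z]` and `ℌ = [ℌ_z, ℌ_y]` correspond to the `Sum`-indexed columns of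
`G` and `H`. -/
def Stack3 {sC sG sH nd nz ny : ℕ} (C : Matrix (Fin sC) (Fin nd) ℝ)
    (G : Matrix (Fin sG) (Fin nd ⊕ Fin nz) ℝ)
    (H : Matrix (Fin sH) (Fin nz ⊕ Fin ny) ℝ) :
    Matrix (Fin sC ⊕ Fin sG ⊕ Fin sH) (Fin nd ⊕ Fin nz ⊕ Fin ny) ℝ :=
  Matrix.of (Sum.elim
    (fun i => Sum.elim (C i) (fun _ => 0))
    (Sum.elim
      (fun i => Sum.elim (fun j => G i (Sum.inl j))
        (Sum.elim (fun j => G i (Sum.inr j)) (fun _ => 0)))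
      (fun i => Sum.elim (fun _ => 0) (H i))))


lemma exists_signal {m n : Type*} [Fintype n] (V1 V0 : Matrix m n ℝ) (v0 : m → ℝ)
    (hext : Extendable V1 V0 v0) (u0 u1 : n → ℝ) (h : V1 *ᵥ u1 + V0 *ᵥ u0 ≤ v0) :
    ∃ u : ℕ → (n → ℝ), u 0 = u0 ∧ u 1 = u1 ∧
      ∀ k, V1 *ᵥ u (k + 1) + V0 *ᵥ u k ≤ v0 := by
  let F : ℕ → {p : (n → ℝ) × (n → ℝ) // V1 *ᵥ p.2 + V0 *ᵥ p.1 ≤ v0} := fun k =>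
    Nat.rec ⟨(u0, u1), h⟩
      (fun _ p => ⟨(p.1.2, Classical.choose (hext p.1.1 p.1.2 p.2)),
        Classical.choose_spec (hext p.1.1 p.1.2 p.2)⟩) k
  refine ⟨fun k => (F k).1.1, rfl, rfl, fun k => ?_⟩
  exact (F k).2

lemma stack2_mulVec {sC sG nd nz : ℕ} (C : Matrix (Fin sC) (Fin nd) ℝ)
    (G : Matrix (Fin sG) (Fin nd ⊕ Fin nz) ℝ) (v : Fin nd ⊕ Fin nz → ℝ) :
    Stack2 C G *ᵥ v = Sum.elim (C *ᵥ fun j => v (Sum.inl j)) (G *ᵥ v) := by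
  funext i
  cases i with
  | inl i =>
    simp [Stack2, Matrix.mulVec, dotProduct, Fintype.sum_sum_type]
  | inr i =>
    simp [Stack2, Matrix.mulVec]

/-- Converse direction for assumptions, under extendability: `D ⊆ D⊗` implies the two
vector implications. -/
theorem implications_of_assumptions_subset {nd nz ny sA sG sB sH sC : ℕ}
    (A1 A0 : Matrix (Fin sA) (Fin nd) ℝ) (a0 : Fin sA → ℝ)
    (G1 G0 : Matrix (Fin sG) (Fin nd ⊕ Fin nz) ℝ) (g0 : Fin sG → ℝ)
    (B1 B0 : Matrix (Fin sB) (Fin nz) ℝ) (b0 : Fin sB → ℝ)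
    (H1 H0 : Matrix (Fin sH) (Fin nz ⊕ Fin ny) ℝ) (h0 : Fin sH → ℝ)
    (Cc1 Cc0 : Matrix (Fin sC) (Fin nd) ℝ) (c0 : Fin sC → ℝ)
    (hext1 : Extendable Cc1 Cc0 c0)
    (hext2 : Extendable (Stack2 Cc1 G1) (Stack2 Cc0 G0) (Sum.elim c0 g0))
    (hsub : LinAssump Cc1 Cc0 c0 ⊆
      CompD (LinAssump A1 A0 a0) (LinGuar G1 G0 g0) (LinAssump B1 B0 b0)) :
    (∀ d0 d1 : Fin nd → ℝ,
      Cc1 *ᵥ d1 + Cc0 *ᵥ d0 ≤ c0 → A1 *ᵥ d1 + A0 *ᵥ d0 ≤ a0) ∧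
    (∀ (d0 d1 : Fin nd → ℝ) (z0 z1 : Fin nz → ℝ),
      Cc1 *ᵥ d1 + Cc0 *ᵥ d0 ≤ c0 →
      G1 *ᵥ Sum.elim d1 z1 + G0 *ᵥ Sum.elim d0 z0 ≤ g0 →
      B1 *ᵥ z1 + B0 *ᵥ z0 ≤ b0) := by
  constructor
  · intro d0 d1 hC
    obtain ⟨u, hu0, hu1, hu⟩ := exists_signal Cc1 Cc0 c0 hext1 d0 d1 hC
    have := (hsub hu).1 0
    rwa [hu0, hu1] at this
  · intro d0 d1 z0 z1 hC hG
    have hinit : Stack2 Cc1 G1 *ᵥ Sum.elim d1 z1 + Stack2 Cc0 G0 *ᵥ Sum.elim d0 z0 ≤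
        Sum.elim c0 g0 := by
      rw [stack2_mulVec, stack2_mulVec]
      intro i
      cases i with
      | inl i => exact hC i
      | inr i => exact hG i
    obtain ⟨w, hw0, hw1, hw⟩ := exists_signal _ _ _ hext2 _ _ hinit
    set d : Sig nd := fun k j => w k (Sum.inl j) with hd
    set z : Sig nz := fun k j => w k (Sum.inr j) with hz
    have helim : ∀ k, Sum.elim (d k) (z k) = w k := by
      intro k; funext j; cases j <;> rfl
    have hwk : ∀ k, Sum.elim (Cc1 *ᵥ d (k + 1)) (G1 *ᵥ w (k + 1)) +
        Sum.elim (Cc0 *ᵥ d k) (G0 *ᵥ w k) ≤ Sum.elim c0 g0 := by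
      intro k
      have := hw k
      rwa [stack2_mulVec, stack2_mulVec] at this
    have hdC : d ∈ LinAssump Cc1 Cc0 c0 := fun k i => (hwk k) (Sum.inl i)
    have hdz : (d, z) ∈ LinGuar G1 G0 g0 := by
      intro k i
      have := (hwk k) (Sum.inr i)
      simpa [helim] using this
    have hzB := (hsub hdC).2 z hdz 0
    have hd0 : d 0 = d0 := by funext j; exact congrFun hw0 (Sum.inl j)
    have hd1 : d 1 = d1 := by funext j; exact congrFun hw1 (Sum.inl j)
    have hz0 : z 0 = z0 := by funext j; exact congrFun hw0 (Sum.inr j)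
    have hz1 : z 1 = z1 := by funext j; exact congrFun hw1 (Sum.inr j)
    rwa [hz0, hz1] at hzB
end

section
/- Converse direction for guarantees, under extendability: let C1 = (D1, Ω1), C2 = (D2, Ω2), C = (D, Ω) be linear contracts defined by the data (𝔄¹, 𝔄⁰, 𝔞⁰, 𝔊¹, 𝔊⁰, 𝔤⁰), (𝔅¹, 𝔅⁰, 𝔟⁰, ℌ¹, ℌ⁰, 𝔥⁰) and (ℭ¹, ℭ⁰, 𝔠⁰, 𝔍¹, 𝔍⁰, 𝔧⁰), and write 𝔊^i = [𝔊^i_d, 𝔊^i_z], ℌ^i = [ℌ^i_z, ℌ^i_y] for i = 0, 1. Assume the stacked triple ([[ℭ¹, 0, 0], [𝔊¹_d, 𝔊¹_z, 0], [0, ℌ¹_z, ℌ¹_y]], [[ℭ⁰, 0, 0], [𝔊⁰_d, 𝔊⁰_z, 0], [0, ℌ⁰_z, ℌ⁰_y]], [𝔠⁰; 𝔤⁰; 𝔥⁰]) is extendable. If Ω⊗ ∩ (D × S^{ny}) ⊆ Ω ∩ (D × S^{ny}), where Ω⊗ is the guarantee set of the cascaded composition C1 ⊗ C2, then for all vectors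 d0, d1 ∈ ℝ^{nd}, z0, z1 ∈ ℝ^{nz}, y0, y1 ∈ ℝ^{ny}: ℭ¹d1 + ℭ⁰d0 ≤ 𝔠⁰, 𝔊¹[d1; z1] + 𝔊⁰[d0; z0] ≤ 𝔤⁰ and ℌ¹[z1; y1] + ℌ⁰[z0; y0] ≤ 𝔥⁰ together imply 𝔍¹[d1; y1] + 𝔍⁰[d0; y0] ≤ 𝔧⁰. -/
open Matrix

section Aux

open Classical

variable {m n : Type*} [Fintype n]

/-- One extension step, using choice. -/
noncomputable def extNext (V1 V0 : Matrix m n ℝ) (v0 : m → ℝ)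
    (hext : Extendable V1 V0 v0) (a b : n → ℝ) : n → ℝ :=
  if h : V1 *ᵥ b + V0 *ᵥ a ≤ v0 then Classical.choose (hext a b h) else 0

/-- The extended sequence. -/
noncomputable def extSeq (V1 V0 : Matrix m n ℝ) (v0 : m → ℝ)
    (hext : Extendable V1 V0 v0) (u0 u1 : n → ℝ) : ℕ → (n → ℝ) :=
  fun k => (Nat.rec (motive := fun _ => (n → ℝ) × (n → ℝ)) (u0, u1)
    (fun _ p => (p.2, extNext V1 V0 v0 hext p.1 p.2)) k).1

lemma extSeq_zero (V1 V0 : Matrix m n ℝ) (v0 : m → ℝ)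
    (hext : Extendable V1 V0 v0) (u0 u1 : n → ℝ) :
    extSeq V1 V0 v0 hext u0 u1 0 = u0 := rfl

lemma extSeq_one (V1 V0 : Matrix m n ℝ) (v0 : m → ℝ)
    (hext : Extendable V1 V0 v0) (u0 u1 : n → ℝ) :
    extSeq V1 V0 v0 hext u0 u1 1 = u1 := rfl

lemma extSeq_succ_succ (V1 V0 : Matrix m n ℝ) (v0 : m → ℝ)
    (hext : Extendable V1 V0 v0) (u0 u1 : n → ℝ) (k : ℕ) :
    extSeq V1 V0 v0 hext u0 u1 (k + 2) =
      extNext V1 V0 v0 hext (extSeq V1 V0 v0 hext u0 u1 k)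
        (extSeq V1 V0 v0 hext u0 u1 (k + 1)) := rfl

lemma extSeq_spec (V1 V0 : Matrix m n ℝ) (v0 : m → ℝ)
    (hext : Extendable V1 V0 v0) (u0 u1 : n → ℝ)
    (h01 : V1 *ᵥ u1 + V0 *ᵥ u0 ≤ v0) (k : ℕ) :
    V1 *ᵥ extSeq V1 V0 v0 hext u0 u1 (k + 1) +
      V0 *ᵥ extSeq V1 V0 v0 hext u0 u1 k ≤ v0 := by
  induction k with
  | zero => exact h01
  | succ k ih =>
    rw [extSeq_succ_succ]
    unfold extNext
    rw [dif_pos ih]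
    exact Classical.choose_spec (hext _ _ ih)

end Aux

lemma stack3_mulVec {sC sG sH nd nz ny : ℕ} (C : Matrix (Fin sC) (Fin nd) ℝ)
    (G : Matrix (Fin sG) (Fin nd ⊕ Fin nz) ℝ)
    (H : Matrix (Fin sH) (Fin nz ⊕ Fin ny) ℝ)
    (d : Fin nd → ℝ) (z : Fin nz → ℝ) (y : Fin ny → ℝ) :
    Stack3 C G H *ᵥ Sum.elim d (Sum.elim z y) =
      Sum.elim (C *ᵥ d) (Sum.elim (G *ᵥ Sum.elim d z) (H *ᵥ Sum.elim z y)) := by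
  funext i
  rcases i with i | i | i <;>
    simp [Stack3, Matrix.mulVec, dotProduct, Fintype.sum_sum_type]

/-- Converse direction for guarantees, under extendability of the three-block stacked
triple: `Ω⊗ ∩ (D × S^{ny}) ⊆ Ω ∩ (D × S^{ny})` implies the third vector implication. -/
theorem implication_of_guarantees_subset {nd nz ny sG sH sC sJ : ℕ}
    (G1 G0 : Matrix (Fin sG) (Fin nd ⊕ Fin nz) ℝ) (g0 : Fin sG → ℝ)
    (H1 H0 : Matrix (Fin sH) (Fin nz ⊕ Fin ny) ℝ) (h0 : Fin sH → ℝ)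
    (Cc1 Cc0 : Matrix (Fin sC) (Fin nd) ℝ) (c0 : Fin sC → ℝ)
    (J1 J0 : Matrix (Fin sJ) (Fin nd ⊕ Fin ny) ℝ) (j0 : Fin sJ → ℝ)
    (hext3 : Extendable (Stack3 Cc1 G1 H1) (Stack3 Cc0 G0 H0)
      (Sum.elim c0 (Sum.elim g0 h0)))
    (hsub : CompΩ (LinGuar G1 G0 g0) (LinGuar H1 H0 h0)
        ∩ (LinAssump Cc1 Cc0 c0 ×ˢ (Set.univ : Set (Sig ny))) ⊆
      LinGuar J1 J0 j0 ∩ (LinAssump Cc1 Cc0 c0 ×ˢ (Set.univ : Set (Sig ny)))) :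
    ∀ (d0 d1 : Fin nd → ℝ) (z0 z1 : Fin nz → ℝ) (y0 y1 : Fin ny → ℝ),
      Cc1 *ᵥ d1 + Cc0 *ᵥ d0 ≤ c0 →
      G1 *ᵥ Sum.elim d1 z1 + G0 *ᵥ Sum.elim d0 z0 ≤ g0 →
      H1 *ᵥ Sum.elim z1 y1 + H0 *ᵥ Sum.elim z0 y0 ≤ h0 →
      J1 *ᵥ Sum.elim d1 y1 + J0 *ᵥ Sum.elim d0 y0 ≤ j0 := by

  intro d0 d1 z0 z1 y0 y1 hc hg hh
  set V1 := Stack3 Cc1 G1 H1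
  set V0 := Stack3 Cc0 G0 H0
  set v0 := Sum.elim c0 (Sum.elim g0 h0)
  set u0 := Sum.elim d0 (Sum.elim z0 y0) with hu0
  set u1 := Sum.elim d1 (Sum.elim z1 y1) with hu1
  have h01 : V1 *ᵥ u1 + V0 *ᵥ u0 ≤ v0 := by
    rw [hu0, hu1, stack3_mulVec, stack3_mulVec]
    rintro (i | i | i)
    · exact hc i
    · exact hg i
    · exact hh i
  set u := extSeq V1 V0 v0 hext3 u0 u1 with hu
  have hspec : ∀ k, V1 *ᵥ u (k + 1) + V0 *ᵥ u k ≤ v0 :=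
    extSeq_spec V1 V0 v0 hext3 u0 u1 h01
  set d' : Sig nd := fun k j => u k (Sum.inl j) with hd'
  set z' : Sig nz := fun k j => u k (Sum.inr (Sum.inl j)) with hz'
  set y' : Sig ny := fun k j => u k (Sum.inr (Sum.inr j)) with hy'
  have huk : ∀ k, u k = Sum.elim (d' k) (Sum.elim (z' k) (y' k)) := by
    intro k; funext i; rcases i with i | i | i <;> rfl
  have hspec' : ∀ k,
      Cc1 *ᵥ d' (k+1) + Cc0 *ᵥ d' k ≤ c0 ∧
      G1 *ᵥ Sum.elim (d' (k+1)) (z' (k+1)) + G0 *ᵥ Sum.elim (d' k) (z' k) ≤ g0 ∧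
      H1 *ᵥ Sum.elim (z' (k+1)) (y' (k+1)) + H0 *ᵥ Sum.elim (z' k) (y' k) ≤ h0 := by
    intro k
    have := hspec k
    rw [huk k, huk (k+1), stack3_mulVec, stack3_mulVec] at this
    exact ⟨fun i => this (Sum.inl i), fun i => this (Sum.inr (Sum.inl i)),
      fun i => this (Sum.inr (Sum.inr i))⟩
  have hmem : (d', y') ∈ CompΩ (LinGuar G1 G0 g0) (LinGuar H1 H0 h0)
      ∩ (LinAssump Cc1 Cc0 c0 ×ˢ (Set.univ : Set (Sig ny))) := by
    refine ⟨⟨z', fun k => (hspec' k).2.1, fun k => (hspec' k).2.2⟩,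
      fun k => (hspec' k).1, trivial⟩
  exact (hsub hmem).1 0
end
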